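/- arXiv:2110.04703 — 8 statements merged into one kernel-verified Lean document; each statement's English description precedes it below -/
import Mathlib

section
/- Let A ∈ ℝ^{m×n} have no zero rows, let x⋆ ∈ ℝ^n lie in the row space of A, and set b = A x⋆. Let p_1,...,p_m > 0, let D = Diag(‖A_1‖,...,‖A_m‖) and P = Diag(p_1,...,p_m), and let σ ≥ 0 be a constant such that ‖P^{1/2} D^{-1} A v‖² ≥ σ² ‖v‖² for every v in the row space of A. Let x ∈ ℝ^n be such that x - x⋆ lies in the row space of A, and let S ⊆ {1,...,m} be a selectable set for x, i.e. i ∉ S implies A_i x = b_i, with ∑_{j∈S} p_j > 0. For i ∈ S let x'(i) denote the Kaczmarz update of x with row i. Then ∑_{i∈S} (p_i / ∑_{j∈S} p_j) ‖x'(i) - x⋆‖² ≤ (1 - σ² / ∑_{j∈S} p_j) ‖x - x⋆‖². -/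
open RealInnerProductSpace

/-- (Theorem 1 of the paper, one step.) With positive probabilities
`p₁,…,p_m`, a constant `σ ≥ 0` satisfying `‖P^{1/2} D⁻¹ A v‖² ≥ σ² ‖v‖²` for all `v` in
the row space of `A` (here the rows of `P^{1/2} D⁻¹ A` are `(√pᵢ/‖Aᵢ‖) Aᵢ`), and a
selectable set `S` for the iterate `x` with `∑_{j∈S} pⱼ > 0`, the conditional expected
squared error of the Selectable Set Randomized Kaczmarz update satisfies
`∑_{i∈S} (pᵢ/∑_{j∈S} pⱼ) ‖x'(i) - x⋆‖² ≤ (1 - σ²/∑_{j∈S} pⱼ) ‖x - x⋆‖²`. -/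
theorem ssrk_one_step {m n : ℕ}
    (A : Fin m → EuclideanSpace ℝ (Fin n)) (hA : ∀ i, A i ≠ 0)
    (xstar : EuclideanSpace ℝ (Fin n))
    (hxstar : xstar ∈ Submodule.span ℝ (Set.range A))
    (b : Fin m → ℝ) (hb : ∀ i, b i = ⟪A i, xstar⟫)
    (p : Fin m → ℝ) (hp : ∀ i, 0 < p i)
    (σ : ℝ) (hσ : 0 ≤ σ)
    (hsv : ∀ v ∈ Submodule.span ℝ (Set.range A),
      σ ^ 2 * ‖v‖ ^ 2 ≤ ∑ i, (Real.sqrt (p i) / ‖A i‖ * ⟪A i, v⟫) ^ 2)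
    (x : EuclideanSpace ℝ (Fin n))
    (hx : x - xstar ∈ Submodule.span ℝ (Set.range A))
    (S : Finset (Fin m)) (hS : ∀ i, i ∉ S → ⟪A i, x⟫ = b i)
    (hSpos : 0 < ∑ j ∈ S, p j) :
    ∑ i ∈ S, (p i / ∑ j ∈ S, p j) *
        ‖(x - ((⟪A i, x⟫ - b i) / ‖A i‖ ^ 2) • A i) - xstar‖ ^ 2 ≤
      (1 - σ ^ 2 / ∑ j ∈ S, p j) * ‖x - xstar‖ ^ 2 := by
  set e := x - xstar with he
  set T := ∑ j ∈ S, p j with hT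
  have hr : ∀ i, ⟪A i, x⟫ - b i = ⟪A i, e⟫ := by
    intro i
    rw [hb i, he, inner_sub_right]
  have hnorm : ∀ i : Fin m,
      ‖(x - ((⟪A i, x⟫ - b i) / ‖A i‖ ^ 2) • A i) - xstar‖ ^ 2
        = ‖e‖ ^ 2 - ⟪A i, e⟫ ^ 2 / ‖A i‖ ^ 2 := by
    intro i
    have hAi : ‖A i‖ ≠ 0 := norm_ne_zero_iff.mpr (hA i)
    have h1 : (x - ((⟪A i, x⟫ - b i) / ‖A i‖ ^ 2) • A i) - xstar
        = e - (⟪A i, e⟫ / ‖A i‖ ^ 2) • A i := by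
      rw [hr i, he]; abel
    rw [h1, norm_sub_sq_real, real_inner_smul_right, norm_smul, mul_pow,
      Real.norm_eq_abs, sq_abs, real_inner_comm e (A i)]
    field_simp
    ring
  have hsum : ∑ i ∈ S, p i * (⟪A i, e⟫ ^ 2 / ‖A i‖ ^ 2)
      = ∑ i, (Real.sqrt (p i) / ‖A i‖ * ⟪A i, e⟫) ^ 2 := by
    rw [← Finset.sum_subset (Finset.subset_univ S)]
    · apply Finset.sum_congr rfl
      intro i _
      rw [mul_pow, div_pow, Real.sq_sqrt (hp i).le]
      ring
    · intro i _ hi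
      have : ⟪A i, e⟫ = 0 := by
        rw [he, inner_sub_right, hS i hi, hb i, sub_self]
      simp [this]
  have key : σ ^ 2 * ‖e‖ ^ 2 ≤ ∑ i ∈ S, p i * (⟪A i, e⟫ ^ 2 / ‖A i‖ ^ 2) := by
    rw [hsum]; exact hsv e hx
  have hTne : T ≠ 0 := hSpos.ne'
  calc ∑ i ∈ S, (p i / T) * ‖(x - ((⟪A i, x⟫ - b i) / ‖A i‖ ^ 2) • A i) - xstar‖ ^ 2
      = ∑ i ∈ S, (p i / T) * (‖e‖ ^ 2 - ⟪A i, e⟫ ^ 2 / ‖A i‖ ^ 2) := by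
        exact Finset.sum_congr rfl fun i _ => by rw [hnorm i]
    _ = (∑ i ∈ S, p i / T) * ‖e‖ ^ 2
        - (1 / T) * ∑ i ∈ S, p i * (⟪A i, e⟫ ^ 2 / ‖A i‖ ^ 2) := by
        rw [Finset.sum_mul, Finset.mul_sum]
        rw [← Finset.sum_sub_distrib]
        apply Finset.sum_congr rfl
        intro i _
        field_simp
    _ = ‖e‖ ^ 2 - (1 / T) * ∑ i ∈ S, p i * (⟪A i, e⟫ ^ 2 / ‖A i‖ ^ 2) := by
        rw [← Finset.sum_div, ← hT, div_self hTne, one_mul]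
    _ ≤ ‖e‖ ^ 2 - (1 / T) * (σ ^ 2 * ‖e‖ ^ 2) := by
        have h1 : (0:ℝ) < 1 / T := by positivity
        nlinarith [key, h1]
    _ = (1 - σ ^ 2 / T) * ‖e‖ ^ 2 := by ring
end

section
/- Let A ∈ ℝ^{m×n} have no zero rows, let x⋆ ∈ ℝ^n lie in the row space of A, and set b = A x⋆. Let D = Diag(‖A_1‖,...,‖A_m‖) and let σ ≥ 0 be a constant such that ‖D^{-1} A v‖² ≥ σ² ‖v‖² for every v in the row space of A. Let x ∈ ℝ^n be such that x - x⋆ lies in the row space of A, and let S ⊆ {1,...,m} be a nonempty selectable set for x, i.e. i ∉ S implies A_i x = b_i. For i ∈ S let x'(i) denote the Kaczmarz update of x with row i. Then with uniform probabilities, (1/|S|) ∑_{i∈S} ‖x'(i) - x⋆‖² ≤ (1 - σ²/|S|) ‖x - x⋆‖². -/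
open RealInnerProductSpace

/-- (Corollary 1 of the paper.) With uniform probabilities, a constant
`σ ≥ 0` satisfying `‖D⁻¹ A v‖² ≥ σ² ‖v‖²` for all `v` in the row space of `A` (the rows
of `D⁻¹ A` are `Aᵢ/‖Aᵢ‖`), and a nonempty selectable set `S` for the iterate `x`, the
expected squared error of the SSRK update satisfies
`(1/|S|) ∑_{i∈S} ‖x'(i) - x⋆‖² ≤ (1 - σ²/|S|) ‖x - x⋆‖²`. -/
theorem ssrk_one_step_uniform {m n : ℕ}
    (A : Fin m → EuclideanSpace ℝ (Fin n)) (hA : ∀ i, A i ≠ 0)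
    (xstar : EuclideanSpace ℝ (Fin n))
    (hxstar : xstar ∈ Submodule.span ℝ (Set.range A))
    (b : Fin m → ℝ) (hb : ∀ i, b i = ⟪A i, xstar⟫)
    (σ : ℝ) (hσ : 0 ≤ σ)
    (hsv : ∀ v ∈ Submodule.span ℝ (Set.range A),
      σ ^ 2 * ‖v‖ ^ 2 ≤ ∑ i, (⟪A i, v⟫ / ‖A i‖) ^ 2)
    (x : EuclideanSpace ℝ (Fin n))
    (hx : x - xstar ∈ Submodule.span ℝ (Set.range A))
    (S : Finset (Fin m)) (hSne : S.Nonempty)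
    (hS : ∀ i, i ∉ S → ⟪A i, x⟫ = b i) :
    (1 / (S.card : ℝ)) *
        ∑ i ∈ S, ‖(x - ((⟪A i, x⟫ - b i) / ‖A i‖ ^ 2) • A i) - xstar‖ ^ 2 ≤
      (1 - σ ^ 2 / (S.card : ℝ)) * ‖x - xstar‖ ^ 2 := by
  set e := x - xstar with he
  have hinner : ∀ i, ⟪A i, x⟫ - b i = ⟪A i, e⟫ := by
    intro i
    rw [he, inner_sub_right, hb]
  -- per-index identity
  have key : ∀ i, ‖(x - ((⟪A i, x⟫ - b i) / ‖A i‖ ^ 2) • A i) - xstar‖ ^ 2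
      = ‖e‖ ^ 2 - (⟪A i, e⟫ / ‖A i‖) ^ 2 := by
    intro i
    have hAi : ‖A i‖ ≠ 0 := norm_ne_zero_iff.mpr (hA i)
    have hrw : (x - ((⟪A i, x⟫ - b i) / ‖A i‖ ^ 2) • A i) - xstar
        = e - ((⟪A i, e⟫ / ‖A i‖ ^ 2) • A i) := by
      rw [← hinner i, he]; abel
    rw [hrw, norm_sub_sq_real, real_inner_smul_right, norm_smul, real_inner_comm]
    rw [mul_pow, Real.norm_eq_abs, sq_abs]
    field_simp
    ring
  have hsum : ∑ i ∈ S, ‖(x - ((⟪A i, x⟫ - b i) / ‖A i‖ ^ 2) • A i) - xstar‖ ^ 2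
      = S.card * ‖e‖ ^ 2 - ∑ i ∈ S, (⟪A i, e⟫ / ‖A i‖) ^ 2 := by
    simp only [key]
    rw [Finset.sum_sub_distrib, Finset.sum_const, nsmul_eq_mul]
  have hfull : ∑ i ∈ S, (⟪A i, e⟫ / ‖A i‖) ^ 2 = ∑ i, (⟪A i, e⟫ / ‖A i‖) ^ 2 := by
    apply Finset.sum_subset (Finset.subset_univ S)
    intro i _ hiS
    have : ⟪A i, e⟫ = 0 := by
      rw [he, inner_sub_right, ← hb i, hS i hiS, sub_self]
    rw [this]; simp
  have hT : σ ^ 2 * ‖e‖ ^ 2 ≤ ∑ i ∈ S, (⟪A i, e⟫ / ‖A i‖) ^ 2 := by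
    rw [hfull]; exact hsv e hx
  have hs : (0 : ℝ) < S.card := by
    exact_mod_cast Finset.card_pos.mpr hSne
  rw [hsum]
  have h1 : (1 / (S.card : ℝ)) * (S.card * ‖e‖ ^ 2 - ∑ i ∈ S, (⟪A i, e⟫ / ‖A i‖) ^ 2)
      ≤ (1 / (S.card : ℝ)) * (S.card * ‖e‖ ^ 2 - σ ^ 2 * ‖e‖ ^ 2) := by
    apply mul_le_mul_of_nonneg_left _ (by positivity)
    linarith
  refine h1.trans ?_
  have : (1 / (S.card : ℝ)) * (S.card * ‖e‖ ^ 2 - σ ^ 2 * ‖e‖ ^ 2)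
      = (1 - σ ^ 2 / (S.card : ℝ)) * ‖e‖ ^ 2 := by
    field_simp
  rw [this]
end

section
/- Let A ∈ ℝ^{m×n} with m ≥ 2 have no zero rows, let x⋆ ∈ ℝ^n lie in the row space of A, and set b = A x⋆. Let D = Diag(‖A_1‖,...,‖A_m‖) and let σ ≥ 0 be a constant such that ‖D^{-1} A v‖² ≥ σ² ‖v‖² for every v in the row space of A. Let x ∈ ℝ^n be such that x - x⋆ lies in the row space of A, let i⁻ ∈ {1,...,m} satisfy A_{i⁻} x = b_{i⁻}, and let S = {1,...,m} \ {i⁻} be the non-repetitive selectable set. For i ∈ S let x'(i) denote the Kaczmarz update of x with row i. Then with uniform probabilities, (1/(m-1)) ∑_{i∈S} ‖x'(i) - x⋆‖² ≤ (1 - σ²/(m-1)) ‖x - x⋆‖². -/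
open RealInnerProductSpace

/-- (Corollary 2 of the paper, iterations `k ≥ 1`.) For the
Non-Repetitive Selectable Set Randomized Kaczmarz method with uniform probabilities,
where the selectable set is `S = [m] \ {i⁻}` and the previously chosen row `i⁻`
satisfies its equation, the expected squared error of the update satisfies
`(1/(m-1)) ∑_{i∈S} ‖x'(i) - x⋆‖² ≤ (1 - σ²/(m-1)) ‖x - x⋆‖²`. -/
theorem nssrk_one_step_uniform {m n : ℕ} (hm : 2 ≤ m)
    (A : Fin m → EuclideanSpace ℝ (Fin n)) (hA : ∀ i, A i ≠ 0)
    (xstar : EuclideanSpace ℝ (Fin n))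
    (hxstar : xstar ∈ Submodule.span ℝ (Set.range A))
    (b : Fin m → ℝ) (hb : ∀ i, b i = ⟪A i, xstar⟫)
    (σ : ℝ) (hσ : 0 ≤ σ)
    (hsv : ∀ v ∈ Submodule.span ℝ (Set.range A),
      σ ^ 2 * ‖v‖ ^ 2 ≤ ∑ i, (⟪A i, v⟫ / ‖A i‖) ^ 2)
    (x : EuclideanSpace ℝ (Fin n))
    (hx : x - xstar ∈ Submodule.span ℝ (Set.range A))
    (iprev : Fin m) (hiprev : ⟪A iprev, x⟫ = b iprev)
    (S : Finset (Fin m)) (hS : S = Finset.univ \ {iprev}) :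
    (1 / ((m : ℝ) - 1)) *
        ∑ i ∈ S, ‖(x - ((⟪A i, x⟫ - b i) / ‖A i‖ ^ 2) • A i) - xstar‖ ^ 2 ≤
      (1 - σ ^ 2 / ((m : ℝ) - 1)) * ‖x - xstar‖ ^ 2 := by

  have hm1 : (1:ℝ) ≤ (m : ℝ) - 1 := by
    have : (2:ℝ) ≤ (m:ℝ) := by exact_mod_cast hm
    linarith
  have hm1pos : (0:ℝ) < (m : ℝ) - 1 := by linarith
  set e := x - xstar with he
  have key : ∀ i, ‖(x - ((⟪A i, x⟫ - b i) / ‖A i‖ ^ 2) • A i) - xstar‖ ^ 2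
      = ‖e‖ ^ 2 - (⟪A i, e⟫ / ‖A i‖) ^ 2 := by
    intro i
    have hAi : ‖A i‖ ≠ 0 := norm_ne_zero_iff.mpr (hA i)
    have h1 : ⟪A i, x⟫ - b i = ⟪A i, e⟫ := by
      rw [hb, he, inner_sub_right]
    have h2 : (x - ((⟪A i, x⟫ - b i) / ‖A i‖ ^ 2) • A i) - xstar
        = e - (⟪A i, e⟫ / ‖A i‖ ^ 2) • A i := by
      rw [h1, he]; abel
    rw [h2, @norm_sub_sq_real, real_inner_smul_right, norm_smul,
      Real.norm_eq_abs, mul_pow, sq_abs, real_inner_comm e (A i)]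
    field_simp
    ring
  have rprev : ⟪A iprev, e⟫ = 0 := by
    rw [he, inner_sub_right, hiprev, hb]; ring
  have hsum : ∑ i ∈ S, (⟪A i, e⟫ / ‖A i‖) ^ 2 = ∑ i, (⟪A i, e⟫ / ‖A i‖) ^ 2 := by
    rw [hS]
    rw [Finset.sum_sdiff_eq_sub (Finset.subset_univ _), Finset.sum_singleton, rprev]
    simp
  have hcard : (S.card : ℝ) = (m : ℝ) - 1 := by
    rw [hS]
    rw [Finset.card_sdiff_of_subset (Finset.subset_univ _)]
    simp
    have : 1 ≤ m := by omega
    push_cast [Nat.cast_sub this]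
    ring
  have hT : σ ^ 2 * ‖e‖ ^ 2 ≤ ∑ i ∈ S, (⟪A i, e⟫ / ‖A i‖) ^ 2 := by
    rw [hsum]; exact hsv e hx
  have hsum2 : ∑ i ∈ S, ‖(x - ((⟪A i, x⟫ - b i) / ‖A i‖ ^ 2) • A i) - xstar‖ ^ 2
      = ((m : ℝ) - 1) * ‖e‖ ^ 2 - ∑ i ∈ S, (⟪A i, e⟫ / ‖A i‖) ^ 2 := by
    rw [Finset.sum_congr rfl fun i _ => key i, Finset.sum_sub_distrib,
      Finset.sum_const, nsmul_eq_mul, hcard]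
  rw [hsum2]
  rw [div_mul_eq_mul_div, one_mul, div_le_iff₀ hm1pos]
  have hrhs : (1 - σ ^ 2 / ((m:ℝ) - 1)) * ‖e‖ ^ 2 * ((m:ℝ) - 1)
      = ((m:ℝ) - 1) * ‖e‖ ^ 2 - σ ^ 2 * ‖e‖ ^ 2 := by
    field_simp
  rw [hrhs]
  linarith [hT]
end

section
/- Let A ∈ ℝ^{m×n} have no zero rows, let x⋆ ∈ ℝ^n lie in the row space of A, and set b = A x⋆. Let σ ≥ 0 be a constant such that ‖A v‖² ≥ σ² ‖v‖² for every v in the row space of A. Let x ∈ ℝ^n be such that x - x⋆ lies in the row space of A, and let S ⊆ {1,...,m} be a nonempty selectable set for x, i.e. i ∉ S implies A_i x = b_i. For i ∈ S let x'(i) denote the Kaczmarz update of x with row i. Then with probabilities proportional to squared row norms, ∑_{i∈S} (‖A_i‖² / ∑_{j∈S} ‖A_j‖²) ‖x'(i) - x⋆‖² ≤ (1 - σ² / ∑_{j∈S} ‖A_j‖²) ‖x - x⋆‖². -/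
open RealInnerProductSpace

/-- (Corollary 3 of the paper.) With probabilities proportional to the
squared row norms, a constant `σ ≥ 0` satisfying `‖A v‖² ≥ σ² ‖v‖²` for all `v` in the
row space of `A`, and a nonempty selectable set `S` for the iterate `x`, the expected
squared error of the SSRK update satisfies
`∑_{i∈S} (‖Aᵢ‖²/∑_{j∈S} ‖Aⱼ‖²) ‖x'(i) - x⋆‖² ≤ (1 - σ²/∑_{j∈S} ‖Aⱼ‖²) ‖x - x⋆‖²`. -/
theorem ssrk_one_step_rownorm {m n : ℕ}
    (A : Fin m → EuclideanSpace ℝ (Fin n)) (hA : ∀ i, A i ≠ 0)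
    (xstar : EuclideanSpace ℝ (Fin n))
    (hxstar : xstar ∈ Submodule.span ℝ (Set.range A))
    (b : Fin m → ℝ) (hb : ∀ i, b i = ⟪A i, xstar⟫)
    (σ : ℝ) (hσ : 0 ≤ σ)
    (hsv : ∀ v ∈ Submodule.span ℝ (Set.range A),
      σ ^ 2 * ‖v‖ ^ 2 ≤ ∑ i, ⟪A i, v⟫ ^ 2)
    (x : EuclideanSpace ℝ (Fin n))
    (hx : x - xstar ∈ Submodule.span ℝ (Set.range A))
    (S : Finset (Fin m)) (hSne : S.Nonempty)
    (hS : ∀ i, i ∉ S → ⟪A i, x⟫ = b i) :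
    ∑ i ∈ S, (‖A i‖ ^ 2 / ∑ j ∈ S, ‖A j‖ ^ 2) *
        ‖(x - ((⟪A i, x⟫ - b i) / ‖A i‖ ^ 2) • A i) - xstar‖ ^ 2 ≤
      (1 - σ ^ 2 / ∑ j ∈ S, ‖A j‖ ^ 2) * ‖x - xstar‖ ^ 2 := by
  set e : EuclideanSpace ℝ (Fin n) := x - xstar with he
  set T : ℝ := ∑ j ∈ S, ‖A j‖ ^ 2 with hT
  have hnpos : ∀ i, (0:ℝ) < ‖A i‖ ^ 2 := fun i => pow_pos (norm_pos_iff.mpr (hA i)) 2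
  have hTpos : 0 < T := Finset.sum_pos (fun i _ => hnpos i) hSne
  have hr : ∀ i, ⟪A i, x⟫ - b i = ⟪A i, e⟫ := by
    intro i
    rw [hb, he, inner_sub_right]
  -- per-term identity
  have hterm : ∀ i,
      ‖(x - ((⟪A i, x⟫ - b i) / ‖A i‖ ^ 2) • A i) - xstar‖ ^ 2
        = ‖e‖ ^ 2 - ⟪A i, e⟫ ^ 2 / ‖A i‖ ^ 2 := by
    intro i
    have hrw : (x - ((⟪A i, x⟫ - b i) / ‖A i‖ ^ 2) • A i) - xstar
        = e - ((⟪A i, e⟫ / ‖A i‖ ^ 2) • A i) := by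
      rw [← hr i, he]; abel
    rw [hrw, @norm_sub_sq_real, inner_smul_right, norm_smul, real_inner_comm]
    have hAi : ‖A i‖ ^ 2 ≠ 0 := ne_of_gt (hnpos i)
    rw [Real.norm_eq_abs, mul_pow, sq_abs]
    field_simp
    ring
  rw [Finset.sum_congr rfl (fun i _ => by rw [hterm i])]
  have hsum : ∑ i ∈ S, (‖A i‖ ^ 2 / T) * (‖e‖ ^ 2 - ⟪A i, e⟫ ^ 2 / ‖A i‖ ^ 2)
      = ‖e‖ ^ 2 - (∑ i ∈ S, ⟪A i, e⟫ ^ 2) / T := by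
    have : ∀ i ∈ S, (‖A i‖ ^ 2 / T) * (‖e‖ ^ 2 - ⟪A i, e⟫ ^ 2 / ‖A i‖ ^ 2)
        = (‖A i‖ ^ 2 / T) * ‖e‖ ^ 2 - ⟪A i, e⟫ ^ 2 / T := by
      intro i _
      have hAi : ‖A i‖ ^ 2 ≠ 0 := ne_of_gt (hnpos i)
      have hAi' : ‖A i‖ ≠ 0 := norm_ne_zero_iff.mpr (hA i)
      field_simp
    rw [Finset.sum_congr rfl this, Finset.sum_sub_distrib, ← Finset.sum_mul,
      ← Finset.sum_div, ← hT, div_self (ne_of_gt hTpos), one_mul, Finset.sum_div]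
  rw [hsum]
  have hfull : ∑ i ∈ S, ⟪A i, e⟫ ^ 2 = ∑ i, ⟪A i, e⟫ ^ 2 := by
    refine Finset.sum_subset (Finset.subset_univ S) ?_
    intro i _ hiS
    have : ⟪A i, e⟫ = 0 := by
      rw [he, inner_sub_right, hS i hiS, hb]
      ring
    rw [this]; ring
  have hlow : σ ^ 2 * ‖e‖ ^ 2 ≤ ∑ i ∈ S, ⟪A i, e⟫ ^ 2 := by
    rw [hfull]; exact hsv e hx
  have : σ ^ 2 * ‖e‖ ^ 2 / T ≤ (∑ i ∈ S, ⟪A i, e⟫ ^ 2) / T :=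
    div_le_div_of_nonneg_right hlow hTpos.le
  have h2 : (1 - σ ^ 2 / T) * ‖e‖ ^ 2 = ‖e‖ ^ 2 - σ ^ 2 * ‖e‖ ^ 2 / T := by ring
  linarith
end

section
/- Let A ∈ ℝ^{m×n} with m ≥ 2 have no zero rows, let x⋆ ∈ ℝ^n lie in the row space of A, and set b = A x⋆. Let σ ≥ 0 be a constant such that ‖A v‖² ≥ σ² ‖v‖² for every v in the row space of A. Let x ∈ ℝ^n be such that x - x⋆ lies in the row space of A, let i⁻ ∈ {1,...,m} satisfy A_{i⁻} x = b_{i⁻}, and let S = {1,...,m} \ {i⁻}. For i ∈ S let x'(i) denote the Kaczmarz update of x with row i. Then with probabilities proportional to squared row norms, ∑_{i∈S} (‖A_i‖² / (‖A‖_F² - ‖A_{i⁻}‖²)) ‖x'(i) - x⋆‖² ≤ (1 - σ² / (‖A‖_F² - ‖A_{i⁻}‖²)) ‖x - x⋆‖². -/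
open RealInnerProductSpace

/-- (Corollary 4 of the paper, iterations `k ≥ 1`.) For the
Non-Repetitive Selectable Set Randomized Kaczmarz method with probabilities proportional
to the squared row norms, where `S = [m] \ {i⁻}` and the previously chosen row `i⁻`
satisfies its equation, the expected squared error of the update satisfies
`∑_{i∈S} (‖Aᵢ‖²/(‖A‖_F² - ‖A_{i⁻}‖²)) ‖x'(i) - x⋆‖² ≤
  (1 - σ²/(‖A‖_F² - ‖A_{i⁻}‖²)) ‖x - x⋆‖²`, where `‖A‖_F² = ∑ⱼ ‖Aⱼ‖²`. -/
theorem nssrk_one_step_rownorm {m n : ℕ} (hm : 2 ≤ m)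
    (A : Fin m → EuclideanSpace ℝ (Fin n)) (hA : ∀ i, A i ≠ 0)
    (xstar : EuclideanSpace ℝ (Fin n))
    (hxstar : xstar ∈ Submodule.span ℝ (Set.range A))
    (b : Fin m → ℝ) (hb : ∀ i, b i = ⟪A i, xstar⟫)
    (σ : ℝ) (hσ : 0 ≤ σ)
    (hsv : ∀ v ∈ Submodule.span ℝ (Set.range A),
      σ ^ 2 * ‖v‖ ^ 2 ≤ ∑ i, ⟪A i, v⟫ ^ 2)
    (x : EuclideanSpace ℝ (Fin n))
    (hx : x - xstar ∈ Submodule.span ℝ (Set.range A))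
    (iprev : Fin m) (hiprev : ⟪A iprev, x⟫ = b iprev)
    (S : Finset (Fin m)) (hS : S = Finset.univ \ {iprev}) :
    ∑ i ∈ S, (‖A i‖ ^ 2 / ((∑ j, ‖A j‖ ^ 2) - ‖A iprev‖ ^ 2)) *
        ‖(x - ((⟪A i, x⟫ - b i) / ‖A i‖ ^ 2) • A i) - xstar‖ ^ 2 ≤
      (1 - σ ^ 2 / ((∑ j, ‖A j‖ ^ 2) - ‖A iprev‖ ^ 2)) * ‖x - xstar‖ ^ 2 := by
  set e : EuclideanSpace ℝ (Fin n) := x - xstar with he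
  have hbe : ∀ i, ⟪A i, e⟫ = ⟪A i, x⟫ - b i := by
    intro i; rw [he, inner_sub_right, hb]
  have hnorm : ∀ i : Fin m, ‖(x - ((⟪A i, x⟫ - b i) / ‖A i‖ ^ 2) • A i) - xstar‖ ^ 2
      = ‖e‖ ^ 2 - ⟪A i, e⟫ ^ 2 / ‖A i‖ ^ 2 := by
    intro i
    have hAi : (‖A i‖ : ℝ) ≠ 0 := norm_ne_zero_iff.mpr (hA i)
    have h1 : (x - ((⟪A i, x⟫ - b i) / ‖A i‖ ^ 2) • A i) - xstar
        = e - (⟪A i, e⟫ / ‖A i‖ ^ 2) • A i := by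
      rw [hbe, he]; abel
    rw [h1, norm_sub_sq_real, real_inner_smul_right, norm_smul, mul_pow,
      Real.norm_eq_abs, sq_abs, real_inner_comm e (A i)]
    field_simp
    ring
  have hDsum : (∑ j, ‖A j‖ ^ 2) - ‖A iprev‖ ^ 2 = ∑ i ∈ S, ‖A i‖ ^ 2 := by
    subst hS
    rw [Finset.sum_sdiff_eq_sub (Finset.subset_univ _), Finset.sum_singleton]
  have hDpos : 0 < ∑ i ∈ S, ‖A i‖ ^ 2 := by
    haveI : Nontrivial (Fin m) := Fin.nontrivial_iff_two_le.mpr hm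
    obtain ⟨j, hj⟩ := exists_ne iprev
    refine Finset.sum_pos (fun i _ => pow_pos (norm_pos_iff.mpr (hA i)) 2) ⟨j, ?_⟩
    rw [hS]; simp [hj]
  have hprev0 : ⟪A iprev, e⟫ = 0 := by rw [hbe, hiprev, sub_self]
  have hsumS : ∑ i ∈ S, ⟪A i, e⟫ ^ 2 = ∑ i, ⟪A i, e⟫ ^ 2 := by
    rw [hS, Finset.sum_sdiff_eq_sub (Finset.subset_univ _), Finset.sum_singleton,
      hprev0]
    ring
  have hsv' : σ ^ 2 * ‖e‖ ^ 2 ≤ ∑ i ∈ S, ⟪A i, e⟫ ^ 2 := by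
    rw [hsumS]; exact hsv e hx
  rw [hDsum]
  set D : ℝ := ∑ i ∈ S, ‖A i‖ ^ 2 with hD
  have hterm : ∀ i ∈ S, (‖A i‖ ^ 2 / D) * (‖e‖ ^ 2 - ⟪A i, e⟫ ^ 2 / ‖A i‖ ^ 2)
      = ‖A i‖ ^ 2 * ‖e‖ ^ 2 / D - ⟪A i, e⟫ ^ 2 / D := by
    intro i _
    have hAi : (‖A i‖ : ℝ) ≠ 0 := norm_ne_zero_iff.mpr (hA i)
    field_simp
  calc ∑ i ∈ S, (‖A i‖ ^ 2 / D) *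
        ‖(x - ((⟪A i, x⟫ - b i) / ‖A i‖ ^ 2) • A i) - xstar‖ ^ 2
      = ∑ i ∈ S, (‖A i‖ ^ 2 * ‖e‖ ^ 2 / D - ⟪A i, e⟫ ^ 2 / D) := by
        refine Finset.sum_congr rfl fun i hi => ?_
        rw [hnorm i, hterm i hi]
    _ = (∑ i ∈ S, ‖A i‖ ^ 2) * ‖e‖ ^ 2 / D - (∑ i ∈ S, ⟪A i, e⟫ ^ 2) / D := by
        rw [Finset.sum_sub_distrib, ← Finset.sum_div, ← Finset.sum_div,
          ← Finset.sum_mul]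
    _ = ‖e‖ ^ 2 - (∑ i ∈ S, ⟪A i, e⟫ ^ 2) / D := by
        rw [mul_div_cancel_left₀ _ hDpos.ne']
    _ ≤ ‖e‖ ^ 2 - σ ^ 2 * ‖e‖ ^ 2 / D := by
        have h2 : σ ^ 2 * ‖e‖ ^ 2 / D ≤ (∑ i ∈ S, ⟪A i, e⟫ ^ 2) / D := by
          gcongr
        linarith
    _ = (1 - σ ^ 2 / D) * ‖e‖ ^ 2 := by ring
end

section
/- Let A ∈ ℝ^{m×n} with m ≥ 2 have no zero rows, let x⋆ ∈ ℝ^n lie in the row space of A, and set b = A x⋆. Let σ ≥ 0 be a constant such that ‖A v‖² ≥ σ² ‖v‖² for every v in the row space of A, and let γ = ‖A‖_F² - min_{i∈{1,...,m}} ‖A_i‖². Let x ∈ ℝ^n be such that x - x⋆ lies in the row space of A, let i⁻ ∈ {1,...,m} satisfy A_{i⁻} x = b_{i⁻}, and let S = {1,...,m} \ {i⁻}. For i ∈ S let x'(i) denote the Kaczmarz update of x with row i. Then with probabilities proportional to squared row norms, ∑_{i∈S} (‖A_i‖² / ∑_{j∈S} ‖A_j‖²) ‖x'(i) - x⋆‖²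 ≤ (1 - σ²/γ) ‖x - x⋆‖². -/
open RealInnerProductSpace

/-- (Corollary 5 of the paper.) The NSSRK method with probabilities
proportional to the squared row norms satisfies the best-case Bai–Wu convergence bound:
with `γ = ‖A‖_F² - minᵢ ‖Aᵢ‖²` and `S = [m] \ {i⁻}` where the previously chosen row `i⁻`
satisfies its equation,
`∑_{i∈S} (‖Aᵢ‖²/∑_{j∈S} ‖Aⱼ‖²) ‖x'(i) - x⋆‖² ≤ (1 - σ²/γ) ‖x - x⋆‖²`. -/
theorem nssrk_satisfies_bai_wu_bound {m n : ℕ} (hm : 2 ≤ m)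
    (A : Fin m → EuclideanSpace ℝ (Fin n)) (hA : ∀ i, A i ≠ 0)
    (xstar : EuclideanSpace ℝ (Fin n))
    (hxstar : xstar ∈ Submodule.span ℝ (Set.range A))
    (b : Fin m → ℝ) (hb : ∀ i, b i = ⟪A i, xstar⟫)
    (σ : ℝ) (hσ : 0 ≤ σ)
    (hsv : ∀ v ∈ Submodule.span ℝ (Set.range A),
      σ ^ 2 * ‖v‖ ^ 2 ≤ ∑ i, ⟪A i, v⟫ ^ 2)
    (γ : ℝ) (hγ : γ = (∑ j, ‖A j‖ ^ 2) - ⨅ i, ‖A i‖ ^ 2)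
    (x : EuclideanSpace ℝ (Fin n))
    (hx : x - xstar ∈ Submodule.span ℝ (Set.range A))
    (iprev : Fin m) (hiprev : ⟪A iprev, x⟫ = b iprev)
    (S : Finset (Fin m)) (hS : S = Finset.univ \ {iprev}) :
    ∑ i ∈ S, (‖A i‖ ^ 2 / ∑ j ∈ S, ‖A j‖ ^ 2) *
        ‖(x - ((⟪A i, x⟫ - b i) / ‖A i‖ ^ 2) • A i) - xstar‖ ^ 2 ≤
      (1 - σ ^ 2 / γ) * ‖x - xstar‖ ^ 2 := by
  haveI : Nonempty (Fin m) := ⟨⟨0, by omega⟩⟩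
  set e := x - xstar with he
  have hAi2 : ∀ i, (0:ℝ) < ‖A i‖ ^ 2 := fun i => by
    have := norm_pos_iff.mpr (hA i); positivity
  set T : ℝ := ∑ j ∈ S, ‖A j‖ ^ 2 with hT
  -- another index distinct from iprev
  haveI : Nontrivial (Fin m) := Fin.nontrivial_iff_two_le.mpr hm
  obtain ⟨j0, hj0⟩ : ∃ j : Fin m, j ≠ iprev := exists_ne iprev
  have hj0S : j0 ∈ S := by
    simp [hS, hj0]
  have hTpos : 0 < T := by
    refine Finset.sum_pos' (fun i _ => (hAi2 i).le) ⟨j0, hj0S, hAi2 j0⟩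
  -- sum over univ splits
  have hsplit : (∑ j, ‖A j‖ ^ 2) = T + ‖A iprev‖ ^ 2 := by
    rw [hT, hS]
    rw [Finset.sum_sdiff_eq_sub (by simp)]
    simp
  have hinf_le : (⨅ i, ‖A i‖ ^ 2) ≤ ‖A iprev‖ ^ 2 := by
    apply ciInf_le
    exact (Set.finite_range _).bddBelow
  have hTγ : T ≤ γ := by
    rw [hγ, hsplit]; linarith
  have hγpos : 0 < γ := lt_of_lt_of_le hTpos hTγ
  -- residual as inner with e
  have hres : ∀ i, ⟪A i, x⟫ - b i = ⟪A i, e⟫ := by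
    intro i; rw [hb i, he, inner_sub_right]
  have hiprev0 : ⟪A iprev, e⟫ = 0 := by
    rw [← hres iprev, hiprev, sub_self]
  -- sum over S of squared residuals equals sum over univ
  have hsumres : (∑ i ∈ S, ⟪A i, e⟫ ^ 2) = ∑ i, ⟪A i, e⟫ ^ 2 := by
    rw [hS, Finset.sum_sdiff_eq_sub (by simp), Finset.sum_singleton, hiprev0]
    norm_num
  set P : ℝ := ∑ i ∈ S, ⟪A i, e⟫ ^ 2 with hP
  have hPσ : σ ^ 2 * ‖e‖ ^ 2 ≤ P := by
    rw [hsumres]; exact hsv e hx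
  have hPnn : 0 ≤ P := Finset.sum_nonneg fun i _ => sq_nonneg _
  -- per-term identity
  have hterm : ∀ i ∈ S, (‖A i‖ ^ 2 / T) *
      ‖(x - ((⟪A i, x⟫ - b i) / ‖A i‖ ^ 2) • A i) - xstar‖ ^ 2
      = (‖e‖ ^ 2 * ‖A i‖ ^ 2 - ⟪A i, e⟫ ^ 2) / T := by
    intro i _
    have h1 : (x - ((⟪A i, x⟫ - b i) / ‖A i‖ ^ 2) • A i) - xstar
        = e - ((⟪A i, e⟫ / ‖A i‖ ^ 2) • A i) := by
      rw [hres i, he]; abel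
    rw [h1]
    rw [norm_sub_sq_real, real_inner_smul_right, norm_smul]
    have hA2 : (‖A i‖ ^ 2) ≠ 0 := (hAi2 i).ne'
    have : (‖(⟪A i, e⟫ / ‖A i‖ ^ 2 : ℝ)‖ * ‖A i‖) ^ 2
        = (⟪A i, e⟫ / ‖A i‖ ^ 2) ^ 2 * ‖A i‖ ^ 2 := by
      rw [mul_pow, Real.norm_eq_abs, sq_abs]
    rw [this, real_inner_comm e]
    field_simp
    have h3 : ∀ c : ℝ, ‖A i‖ ^ 2 * (c / ‖A i‖ ^ 2) = c := fun c => by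
      field_simp; exact mul_div_cancel_left₀ c (norm_ne_zero_iff.mpr (hA i))
    rw [mul_add, mul_sub, h3, h3]
    ring
  rw [Finset.sum_congr rfl hterm]
  have hsum2 : (∑ i ∈ S, (‖e‖ ^ 2 * ‖A i‖ ^ 2 - ⟪A i, e⟫ ^ 2) / T)
      = ‖e‖ ^ 2 - P / T := by
    rw [← Finset.sum_div, Finset.sum_sub_distrib, ← Finset.mul_sum, ← hT, ← hP,
      sub_div, mul_div_assoc, div_self hTpos.ne', mul_one]
  rw [hsum2]
  have key : σ ^ 2 * ‖e‖ ^ 2 / γ ≤ P / T := by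
    calc σ ^ 2 * ‖e‖ ^ 2 / γ ≤ P / γ := div_le_div_of_nonneg_right hPσ hγpos.le
      _ ≤ P / T := div_le_div_of_nonneg_left hPnn hTpos hTγ
  have hring : (1 - σ ^ 2 / γ) * ‖e‖ ^ 2 = ‖e‖ ^ 2 - σ ^ 2 * ‖e‖ ^ 2 / γ := by ring
  linarith [key]
end

section
/- Let A ∈ ℝ^{m×n} have no zero rows and let G be the non-orthogonality graph of A: the simple graph on vertex set {1,...,m} in which distinct vertices i and j are adjacent if and only if ⟨A_i, A_j⟩ ≠ 0. Let S ⊆ {1,...,m} be such that its complement S^C = {1,...,m} \ S is an independent set in G. Let i ∈ S and let S' = (S ∪ {j : ⟨A_i, A_j⟩ ≠ 0}) \ {i} be the Gramian selectable set update. Then the complement of S' is also an independent set in G. -/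
open RealInnerProductSpace

/-- The non-orthogonality graph of a matrix with rows `A₁,…,A_m`: distinct row indices
`i` and `j` are adjacent if and only if `⟪Aᵢ, Aⱼ⟫ ≠ 0`. -/
def nonOrthGraph {m n : ℕ} (A : Fin m → EuclideanSpace ℝ (Fin n)) :
    SimpleGraph (Fin m) where
  Adj i j := i ≠ j ∧ ⟪A i, A j⟫ ≠ 0
  symm := by
    constructor
    intro i j h
    exact ⟨h.1.symm, by rw [real_inner_comm]; exact h.2⟩
  loopless := ⟨fun i h => h.1 rfl⟩

/-- A set of vertices is independent when no two of its elements are adjacent. -/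
def IsIndepSet {V : Type*} (G : SimpleGraph V) (s : Set V) : Prop :=
  s.Pairwise fun a b => ¬ G.Adj a b

/-- The Gramian selectable set update preserves independence of the
complement: if the complement of `S` is an independent set in the non-orthogonality
graph of `A`, `i ∈ S`, and `S' = (S ∪ {j : ⟪Aᵢ, Aⱼ⟫ ≠ 0}) \ {i}`, then the complement
of `S'` is also an independent set in the non-orthogonality graph. -/
theorem gssrk_update_complement_indep {m n : ℕ}
    (A : Fin m → EuclideanSpace ℝ (Fin n)) (hA : ∀ i, A i ≠ 0)
    (S : Finset (Fin m)) (hS : IsIndepSet (nonOrthGraph A) ↑(Sᶜ))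
    (i : Fin m) (hi : i ∈ S)
    (S' : Finset (Fin m))
    (hS' : ∀ j, j ∈ S' ↔ (j ∈ S ∨ ⟪A i, A j⟫ ≠ 0) ∧ j ≠ i) :
    IsIndepSet (nonOrthGraph A) ↑(S'ᶜ) := by
  intro a ha b hb hab hadj
  simp only [Finset.coe_compl, Set.mem_compl_iff, Finset.mem_coe] at ha hb
  rw [hS'] at ha; rw [hS'] at hb
  -- a,b are either = i or (not in S and orthogonal to A i)
  rcases eq_or_ne a i with rfl | hai
  · rcases eq_or_ne b a with rfl | hbi
    · exact hab rfl
    · have h : ¬(b ∈ S ∨ ⟪A a, A b⟫ ≠ 0) := fun hP => hb ⟨hP, hbi⟩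
      push_neg at h
      exact hadj.2 h.2
  · have h : ¬(a ∈ S ∨ ⟪A i, A a⟫ ≠ 0) := fun hP => ha ⟨hP, hai⟩
    push_neg at h
    obtain ⟨ha1, ha2⟩ := h
    rcases eq_or_ne b i with rfl | hbi
    · exact hadj.2 (by rw [real_inner_comm]; exact ha2)
    · have h' : ¬(b ∈ S ∨ ⟪A i, A b⟫ ≠ 0) := fun hP => hb ⟨hP, hbi⟩
      push_neg at h'
      exact hS (by simp [ha1]) (by simp [h'.1]) hab hadj
end

section
/- Let A ∈ ℝ^{m×n} have no zero rows and let M ⊆ {1,...,m} be an independent set in the non-orthogonality graph of A, i.e. ⟨A_i, A_j⟩ = 0 for all distinct i, j ∈ M. Enumerate M as m_1, m_2, ..., m_t, start with S_0 = {1,...,m}, and for each step 0 ≤ k < t apply the Gramian selectable set update S_{k+1} = (S_k ∪ {j : ⟨A_{m_{k+1}}, A_j⟩ ≠ 0}) \ {m_{k+1}}. Then S_t = {1,...,m} \ M; in particular |S_t| = m - |M|, so choosing M to be a maximum independent set shows the lower bound m - α on the size of the Gramian selectable set is attained, where α is the independence number of the non-orthogonality graph. -/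
open RealInnerProductSpace

/-- (Proposition 1 of the paper.) Let `M` be an independent set in the
non-orthogonality graph of `A` (i.e. `⟪Aᵢ, Aⱼ⟫ = 0` for all distinct `i, j ∈ M`),
enumerated as `f 0, f 1, …, f (t-1)`. Starting from `S₀ = {1,…,m}` and applying the
Gramian selectable set update `S_{k+1} = (S_k ∪ {j : ⟪A_{f k}, A_j⟫ ≠ 0}) \ {f k}` for
each `k < t`, the final selectable set is `S_t = {1,…,m} \ M`; in particular
`|S_t| = m - |M|`, so the lower bound on the size of the Gramian selectable set is
attained when `M` is a maximum independent set. -/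
theorem gssrk_lower_bound_attained {m n t : ℕ}
    (A : Fin m → EuclideanSpace ℝ (Fin n)) (hA : ∀ i, A i ≠ 0)
    (M : Finset (Fin m))
    (hM : ∀ i ∈ M, ∀ j ∈ M, i ≠ j → ⟪A i, A j⟫ = 0)
    (f : Fin t → Fin m) (hf : Function.Injective f)
    (hfM : Finset.image f Finset.univ = M)
    (Ss : ℕ → Finset (Fin m)) (hS0 : Ss 0 = Finset.univ)
    (hstep : ∀ k : Fin t, ∀ j,
      j ∈ Ss ((k : ℕ) + 1) ↔ (j ∈ Ss (k : ℕ) ∨ ⟪A (f k), A j⟫ ≠ 0) ∧ j ≠ f k) :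
    Ss t = Finset.univ \ M ∧ (Ss t).card = m - M.card := by
  have key : ∀ k, k ≤ t →
      Ss k = Finset.univ \ (Finset.univ.filter (fun i : Fin t => (i : ℕ) < k)).image f := by
    intro k hk
    induction k with
    | zero => simp [hS0]
    | succ k ih =>
      have hk' : k < t := hk
      have ihk := ih (le_of_lt hk')
      ext j
      rw [hstep ⟨k, hk'⟩, ihk]
      simp only [Finset.mem_sdiff, Finset.mem_univ, true_and, Finset.mem_image,
        Finset.mem_filter, not_exists, not_and]
      constructor
      · rintro ⟨h1, h2⟩ i hi hfi
        rcases Nat.lt_succ_iff_lt_or_eq.mp hi with hi' | hi'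
        · rcases h1 with h1 | h1
          · exact h1 i hi' hfi
          · apply h1
            apply hM
            · rw [← hfM]; exact Finset.mem_image_of_mem f (Finset.mem_univ _)
            · rw [← hfM, ← hfi]; exact Finset.mem_image_of_mem f (Finset.mem_univ _)
            · intro h; exact h2 (hfi ▸ h.symm)
        · apply h2
          rw [← hfi]
          congr 1
          exact Fin.ext hi'
      · intro h
        refine ⟨Or.inl fun i hi => h i (Nat.lt_succ_of_lt hi), ?_⟩
        intro hj
        exact h ⟨k, hk'⟩ (Nat.lt_succ_self k) hj.symm
  have h1 : Ss t = Finset.univ \ M := by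
    rw [key t le_rfl, ← hfM]
    congr 1
    congr 1
    ext i
    simp [i.isLt]
  refine ⟨h1, ?_⟩
  rw [h1, Finset.card_sdiff_of_subset (Finset.subset_univ M), Finset.card_univ, Fintype.card_fin]
end
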